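/- Let (X,d) be a finite metric space with at least two points, h a chaining functional of log-concave type, and C a chaining tree for (X,d). Then there exists a probability measure μ on X with max_{x∈X} ∫₀^∞ h(μ(B(x,r))) dr ≤ 3·val_h(C); in particular, γ_h(X) ≤ 3·val_h(C). -/

import Mathlib

open MeasureTheory

noncomputable section

/-- `f` is log-concave on `[0,∞)`. -/
def IsLogConcaveOn (f : ℝ → ℝ) : Prop :=
  ∀ x ∈ Set.Ici (0:ℝ), ∀ y ∈ Set.Ici (0:ℝ), ∀ t ∈ Set.Icc (0:ℝ) 1,
    f x ^ t * f y ^ (1 - t) ≤ f (t * x + (1 - t) * y)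

/-- `f` is a continuous, non-increasing, log-concave probability density on `[0,∞)`
normalized so that `f 0 = 1`. -/
structure IsChainingDensity (f : ℝ → ℝ) : Prop where
  nonneg : ∀ t : ℝ, 0 ≤ t → 0 ≤ f t
  continuousOn : ContinuousOn f (Set.Ici 0)
  antitoneOn : AntitoneOn f (Set.Ici 0)
  logConcave : IsLogConcaveOn f
  total : (∫ t in Set.Ioi (0:ℝ), f t) = 1
  normalized : f 0 = 1

/-- The complementary cumulative distribution function `F(s) = ∫_s^∞ f(t) dt`. -/
def ccdf (f : ℝ → ℝ) (s : ℝ) : ℝ := ∫ t in Set.Ioi s, f t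

/-- The chaining functional `h(p) = F⁻¹(p)`, defined on `(0,1]` as the least
`s ≥ 0` with `F(s) ≤ p`. -/
def chainFn (f : ℝ → ℝ) (p : ℝ) : ℝ := sInf {s : ℝ | 0 ≤ s ∧ ccdf f s ≤ p}

open scoped ENNReal

/-- The extended (`[0,∞]`-valued) chaining functional: `h(p)` is the least `s ≥ 0`
with `F(s) ≤ p`, and `+∞` when no such `s` exists (in particular
`h(0) = lim_{p→0⁺} h(p) ∈ (0,∞]`). -/
def chainFnE (f : ℝ → ℝ) (p : ℝ) : ℝ≥0∞ :=
  sInf {t : ℝ≥0∞ | ∃ s : ℝ, 0 ≤ s ∧ ccdf f s ≤ p ∧ t = ENNReal.ofReal s}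

/-- A probability measure on a finite set, given by its point masses. -/
def IsProbOn {X : Type*} [Fintype X] (μ : X → ℝ) : Prop :=
  (∀ x, 0 ≤ μ x) ∧ (∑ x, μ x) = 1

/-- The mass `μ(B(x,r))` of the closed ball of radius `r` around `x`. -/
def ballMass {X : Type*} [MetricSpace X] [Fintype X] (μ : X → ℝ) (x : X) (r : ℝ) : ℝ :=
  ∑ y ∈ Finset.univ.filter (fun y => dist x y ≤ r), μ y

/-- `∫₀^∞ h(μ(B(x,r))) dr`, valued in `[0,∞]`. -/
def Hint {X : Type*} [MetricSpace X] [Fintype X] (f : ℝ → ℝ) (μ : X → ℝ) (x : X) : ℝ≥0∞ :=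
  ∫⁻ r in Set.Ioi (0:ℝ), chainFnE f (ballMass μ x r)

/-- The diameter of the finite metric space `X`. -/
def fdiam (X : Type*) [MetricSpace X] : ℝ := Metric.diam (Set.univ : Set X)

/-- The sum of the edge labels of a rooted spanning tree described by a parent
function (one edge per non-root vertex). -/
def edgeLabelSum {X : Type*} [Fintype X] (root : X) (prob : X → ℝ) : ℝ :=
  letI := Classical.decEq X
  ∑ x ∈ Finset.univ.erase root, prob x

/-- A chaining tree on the finite metric space `X`: a rooted spanning tree on `X`
(described by a parent function), together with probability labels
`p_e ∈ (0,1/2]` on the edges `e = {x, parent x}` (`x ≠ root`) summing to at most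
`1/2`. -/
structure ChainingTree (X : Type*) [MetricSpace X] [Fintype X] where
  root : X
  parent : X → X
  prob : X → ℝ
  parent_root : parent root = root
  reaches_root : ∀ x : X, ∃ n : ℕ, parent^[n] x = root
  prob_mem : ∀ x : X, x ≠ root → prob x ∈ Set.Ioc (0:ℝ) (1/2)
  prob_sum : edgeLabelSum root prob ≤ 1/2

/-- The length `l_e = d(u,v)·h(p_e)` of the parent edge at `x` (zero at the root). -/
def edgeLen {X : Type*} [MetricSpace X] [Fintype X] (f : ℝ → ℝ)
    (C : ChainingTree X) (x : X) : ℝ :=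
  dist x (C.parent x) * chainFn f (C.prob x)

/-- The total length `Σ_{e ∈ P_x} l_e` of the path from `x` to the root (the path
reaches the root within `|X|` steps, and the root's term is `0`). -/
def pathLen {X : Type*} [MetricSpace X] [Fintype X] (f : ℝ → ℝ)
    (C : ChainingTree X) (x : X) : ℝ :=
  ∑ n ∈ Finset.range (Fintype.card X), edgeLen f C (C.parent^[n] x)

/-- The value `val_h(C) = max_{x∈X} Σ_{e ∈ P_x} l_e` of a chaining tree. -/
def ctVal {X : Type*} [MetricSpace X] [Fintype X] (f : ℝ → ℝ)
    (C : ChainingTree X) : ℝ :=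
  ⨆ x : X, pathLen f C x

/-- The majorizing measure functional
`γ_h(X) = inf_μ max_{x∈X} ∫₀^∞ h(μ(B(x,r))) dr`. -/
def gammaPrimal (X : Type*) [MetricSpace X] [Fintype X] (f : ℝ → ℝ) : ℝ≥0∞ :=
  ⨅ μ : {m : X → ℝ // IsProbOn m}, ⨆ x : X, Hint f μ.1 x


section Helpers

lemma exists_ccdf_le {f : ℝ → ℝ} (hfi : IntegrableOn f (Set.Ioi 0))
    (hftot : (∫ t in Set.Ioi (0:ℝ), f t) = 1) {p : ℝ} (hp : 0 < p) :
    ∃ s : ℝ, 0 ≤ s ∧ ccdf f s ≤ p := by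
  have hU : (⋃ n : ℕ, Set.Ioc (0:ℝ) n) = Set.Ioi 0 := by
    ext t; simp only [Set.mem_iUnion, Set.mem_Ioc, Set.mem_Ioi]
    constructor
    · rintro ⟨n, h, _⟩; exact h
    · intro h; obtain ⟨n, hn⟩ := exists_nat_ge t; exact ⟨n, h, hn⟩
  have htend : Filter.Tendsto (fun n : ℕ => ∫ t in Set.Ioc (0:ℝ) n, f t) Filter.atTop
      (nhds 1) := by
    have := tendsto_setIntegral_of_monotone (f := f) (μ := volume)
      (s := fun n : ℕ => Set.Ioc (0:ℝ) n) (fun n => measurableSet_Ioc)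
      (fun m n hmn => Set.Ioc_subset_Ioc le_rfl (by exact_mod_cast hmn))
      (by rw [hU]; exact hfi)
    rwa [hU, hftot] at this
  have hccdf : ∀ n : ℕ, ccdf f n = 1 - ∫ t in Set.Ioc (0:ℝ) n, f t := by
    intro n
    have hsplit : (∫ t in Set.Ioc (0:ℝ) n, f t) + (∫ t in Set.Ioi (n:ℝ), f t)
        = ∫ t in Set.Ioi (0:ℝ), f t := by
      rw [← setIntegral_union (Set.Ioc_disjoint_Ioi le_rfl) measurableSet_Ioi
        (hfi.mono_set Set.Ioc_subset_Ioi_self) (hfi.mono_set (Set.Ioi_subset_Ioi n.cast_nonneg)),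
        Set.Ioc_union_Ioi_eq_Ioi n.cast_nonneg]
    rw [ccdf]; linarith [hsplit.trans hftot]
  have htend0 : Filter.Tendsto (fun n : ℕ => ccdf f n) Filter.atTop (nhds 0) := by
    simp only [hccdf]
    simpa using htend.const_sub 1
  obtain ⟨n, hn⟩ := (htend0.eventually_le_const hp).exists
  exact ⟨n, n.cast_nonneg, hn⟩

lemma chainFn_nonneg (f : ℝ → ℝ) (p : ℝ) : 0 ≤ chainFn f p :=
  Real.sInf_nonneg (fun _ hs => hs.1)

lemma chainFnE_eq {f : ℝ → ℝ} (hfi : IntegrableOn f (Set.Ioi 0))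
    (hftot : (∫ t in Set.Ioi (0:ℝ), f t) = 1) {p : ℝ} (hp : 0 < p) :
    chainFnE f p = ENNReal.ofReal (chainFn f p) := by
  have hne : {s : ℝ | 0 ≤ s ∧ ccdf f s ≤ p}.Nonempty := exists_ccdf_le hfi hftot hp
  have hbdd : BddBelow {s : ℝ | 0 ≤ s ∧ ccdf f s ≤ p} := ⟨0, fun s hs => hs.1⟩
  have himg : {t : ℝ≥0∞ | ∃ s : ℝ, 0 ≤ s ∧ ccdf f s ≤ p ∧ t = ENNReal.ofReal s}
      = ENNReal.ofReal '' {s : ℝ | 0 ≤ s ∧ ccdf f s ≤ p} := by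
    ext t; simp only [Set.mem_setOf_eq, Set.mem_image]
    constructor
    · rintro ⟨s, h1, h2, h3⟩; exact ⟨s, ⟨h1, h2⟩, h3.symm⟩
    · rintro ⟨s, ⟨h1, h2⟩, h3⟩; exact ⟨s, h1, h2, h3.symm⟩
  rw [chainFnE, himg, chainFn,
    ← Monotone.map_csInf_of_continuousAt ENNReal.continuous_ofReal.continuousAt
      (fun _ _ hab => ENNReal.ofReal_le_ofReal hab) hne hbdd]

lemma chainFnE_antitone (f : ℝ → ℝ) {p q : ℝ} (hpq : p ≤ q) : chainFnE f q ≤ chainFnE f p :=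
  sInf_le_sInf (fun _ ⟨s, h1, h2, h3⟩ => ⟨s, h1, h2.trans hpq, h3⟩)

lemma chainFnE_of_one_le {f : ℝ → ℝ}
    (hftot : (∫ t in Set.Ioi (0:ℝ), f t) = 1) {p : ℝ} (h1 : 1 ≤ p) : chainFnE f p = 0 := by
  have h0 : ccdf f 0 ≤ p := by rw [ccdf, hftot]; exact h1
  refine le_antisymm ?_ zero_le
  have := sInf_le (s := {t : ℝ≥0∞ | ∃ s : ℝ, 0 ≤ s ∧ ccdf f s ≤ p ∧ t = ENNReal.ofReal s})
    (a := ENNReal.ofReal 0) ⟨0, le_rfl, h0, rfl⟩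
  simpa [chainFnE] using this

lemma chainFn_anti {f : ℝ → ℝ} (hfi : IntegrableOn f (Set.Ioi 0))
    (hftot : (∫ t in Set.Ioi (0:ℝ), f t) = 1) {p q : ℝ} (hp : 0 < p) (hpq : p ≤ q) :
    chainFn f q ≤ chainFn f p :=
  csInf_le_csInf ⟨0, fun _ hs => hs.1⟩ (exists_ccdf_le hfi hftot hp)
    (fun _ ⟨h1, h2⟩ => ⟨h1, h2.trans hpq⟩)

lemma iterate_card_eq_root {X : Type} [MetricSpace X] [Fintype X] (C : ChainingTree X)
    (x : X) : C.parent^[Fintype.card X] x = C.root := by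
  classical
  have h := C.reaches_root x
  set n := Nat.find h with hn
  have hroot : C.parent^[n] x = C.root := Nat.find_spec h
  have hgen : ∀ i j : ℕ, i < j → j < n + 1 → C.parent^[i] x = C.parent^[j] x → False := by
    intro i j hlt hj hij'
    have hkey : C.parent^[n - j + i] x = C.root := by
      have e1 : C.parent^[n - j + i] x = C.parent^[n-j] (C.parent^[j] x) := by
        rw [← hij', ← Function.iterate_add_apply]
      have e2 : C.parent^[n-j] (C.parent^[j] x) = C.parent^[n] x := by
        rw [← Function.iterate_add_apply]
        congr 1; omega
      rw [e1, e2, hroot]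
    exact Nat.find_min h (by omega : n - j + i < n) hkey
  have hinj : Set.InjOn (fun k => C.parent^[k] x) (Finset.range (n+1)) := by
    intro i hi j hj hij
    simp only [Finset.coe_range, Set.mem_Iio] at hi hj
    rcases lt_trichotomy i j with hlt | heq | hgt
    · exact absurd hij (fun hh => hgen i j hlt hj hh)
    · exact heq
    · exact absurd hij (fun hh => hgen j i hgt hi hh.symm)
  have hcard : n + 1 ≤ Fintype.card X := by
    have := Finset.card_le_card_of_injOn (fun k => C.parent^[k] x)
      (fun a _ => Finset.mem_univ _) hinj
    simpa using this
  have : Fintype.card X = (Fintype.card X - n) + n := by omega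
  rw [this, Function.iterate_add_apply, hroot, Function.iterate_fixed C.parent_root]

lemma dist_le_pathSum {X : Type} [MetricSpace X] [Fintype X] (C : ChainingTree X)
    (x : X) (k : ℕ) :
    dist x (C.parent^[k] x) ≤ ∑ j ∈ Finset.range k,
      dist (C.parent^[j] x) (C.parent^[j+1] x) := by
  induction k with
  | zero => simp
  | succ k ih =>
    rw [Finset.sum_range_succ]
    exact (dist_triangle x (C.parent^[k] x) (C.parent^[k+1] x)).trans (by gcongr)

end Helpers

/-- given a chaining tree `C` for a finite metric space `X` with at
least two points, there is a probability measure `μ` on `X` with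
`max_{x∈X} ∫₀^∞ h(μ(B(x,r))) dr ≤ 3·val_h(C)`; in particular
`γ_h(X) ≤ 3·val_h(C)`. -/
theorem stmt9 {X : Type} [MetricSpace X] [Fintype X] [Nontrivial X]
    (f : ℝ → ℝ) (hf : IsChainingDensity f) (C : ChainingTree X) :
    (∃ μ : X → ℝ, IsProbOn μ ∧
      (⨆ x : X, Hint f μ x) ≤ ENNReal.ofReal (3 * ctVal f C)) ∧
    gammaPrimal X f ≤ ENNReal.ofReal (3 * ctVal f C) := by
  letI := Classical.decEq X
  have hfi : IntegrableOn f (Set.Ioi 0) := by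
    by_contra h
    have := hf.total
    rw [MeasureTheory.integral_undef h] at this
    norm_num at this
  have hELS : edgeLabelSum C.root C.prob = ∑ y ∈ Finset.univ.erase C.root, C.prob y := rfl
  have hS_nonneg0 : 0 ≤ edgeLabelSum C.root C.prob := by
    rw [hELS]
    exact Finset.sum_nonneg fun y hy => (C.prob_mem y (Finset.ne_of_mem_erase hy)).1.le
  have hS_half := C.prob_sum
  set μ : X → ℝ := fun y => if y = C.root then 1 - edgeLabelSum C.root C.prob else C.prob y
    with hμdef
  have hμroot : μ C.root = 1 - edgeLabelSum C.root C.prob := if_pos rfl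
  have hμroot_ge : (1:ℝ)/2 ≤ μ C.root := by rw [hμroot]; linarith
  have hμy : ∀ y, y ≠ C.root → μ y = C.prob y := fun y hy => if_neg hy
  have hμnonneg : ∀ y, 0 ≤ μ y := by
    intro y
    by_cases hy : y = C.root
    · subst hy; linarith
    · rw [hμy y hy]; exact (C.prob_mem y hy).1.le
  have hμsum : ∑ y, μ y = 1 := by
    rw [← Finset.add_sum_erase Finset.univ μ (Finset.mem_univ C.root), hμroot]
    have heq : ∑ y ∈ Finset.univ.erase C.root, μ y
        = ∑ y ∈ Finset.univ.erase C.root, C.prob y :=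
      Finset.sum_congr rfl fun y hy => hμy y (Finset.ne_of_mem_erase hy)
    rw [heq, ← hELS]; ring
  have hprob : IsProbOn μ := ⟨hμnonneg, hμsum⟩
  have hmass_ge : ∀ (x y : X) (r : ℝ), dist x y ≤ r → μ y ≤ ballMass μ x r := by
    intro x y r hr
    exact Finset.single_le_sum (f := μ) (fun i _ => hμnonneg i)
      (Finset.mem_filter.mpr ⟨Finset.mem_univ y, hr⟩)
  have hmass_one : ∀ (x : X) (r : ℝ), fdiam X ≤ r → ballMass μ x r = 1 := by
    intro x r hr
    have hfil : Finset.univ.filter (fun y => dist x y ≤ r) = Finset.univ := by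
      apply Finset.filter_true_of_mem
      intro y _
      exact le_trans (Metric.dist_le_diam_of_mem Set.finite_univ.isBounded
        (Set.mem_univ x) (Set.mem_univ y)) hr
    rw [ballMass, hfil, hμsum]
  have hbddp : BddAbove (Set.range (pathLen f C)) := Set.Finite.bddAbove (Set.finite_range _)
  have hpath_le : ∀ x, pathLen f C x ≤ ctVal f C := fun x => le_ciSup hbddp x
  have hedge_nonneg : ∀ y, 0 ≤ edgeLen f C y :=
    fun y => mul_nonneg dist_nonneg (chainFn_nonneg f _)
  have hpath_nonneg : ∀ x, 0 ≤ pathLen f C x :=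
    fun x => Finset.sum_nonneg fun j _ => hedge_nonneg _
  have hval_nonneg : 0 ≤ ctVal f C := (hpath_nonneg C.root).trans (hpath_le C.root)
  have hc0 : 0 ≤ chainFn f (1/2) := chainFn_nonneg f _
  have hdiam_nonneg : 0 ≤ fdiam X := by rw [fdiam]; exact Metric.diam_nonneg
  have hpath_ge : ∀ u, chainFn f (1/2) * dist u C.root ≤ pathLen f C u := by
    intro u
    have h1 : dist u C.root ≤ ∑ j ∈ Finset.range (Fintype.card X),
        dist (C.parent^[j] u) (C.parent^[j+1] u) := by
      have := dist_le_pathSum C u (Fintype.card X)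
      rwa [iterate_card_eq_root C u] at this
    calc chainFn f (1/2) * dist u C.root
        ≤ chainFn f (1/2) * ∑ j ∈ Finset.range (Fintype.card X),
            dist (C.parent^[j] u) (C.parent^[j+1] u) := mul_le_mul_of_nonneg_left h1 hc0
      _ = ∑ j ∈ Finset.range (Fintype.card X),
            chainFn f (1/2) * dist (C.parent^[j] u) (C.parent^[j+1] u) := Finset.mul_sum _ _ _
      _ ≤ ∑ j ∈ Finset.range (Fintype.card X), edgeLen f C (C.parent^[j] u) := by
          apply Finset.sum_le_sum
          intro j _
          rw [Function.iterate_succ_apply']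
          by_cases hy : C.parent^[j] u = C.root
          · rw [hy, C.parent_root, dist_self, mul_zero]
            exact hedge_nonneg _
          · obtain ⟨hp0, hp2⟩ := C.prob_mem _ hy
            have hle : chainFn f (1/2) ≤ chainFn f (C.prob (C.parent^[j] u)) :=
              chainFn_anti hfi hf.total hp0 hp2
            have hdn : (0:ℝ) ≤ dist (C.parent^[j] u) (C.parent (C.parent^[j] u)) := dist_nonneg
            rw [edgeLen]
            nlinarith
      _ = pathLen f C u := rfl
  have hdiam : chainFn f (1/2) * fdiam X ≤ 2 * ctVal f C := by
    rcases hc0.eq_or_lt with hc | hc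
    · rw [← hc, zero_mul]; linarith
    · have hd : ∀ u v : X, dist u v ≤ 2 * ctVal f C / chainFn f (1/2) := by
        intro u v
        rw [le_div_iff₀ hc]
        have t1 := hpath_ge u
        have t2 := hpath_ge v
        have t3 := hpath_le u
        have t4 := hpath_le v
        have htri : dist u v ≤ dist u C.root + dist v C.root := dist_triangle_right u v C.root
        nlinarith [mul_le_mul_of_nonneg_right htri hc.le]
      have hD : fdiam X ≤ 2 * ctVal f C / chainFn f (1/2) :=
        Metric.diam_le_of_forall_dist_le (div_nonneg (by linarith) hc.le)
          (fun u _ v _ => hd u v)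
      calc chainFn f (1/2) * fdiam X
          ≤ chainFn f (1/2) * (2 * ctVal f C / chainFn f (1/2)) :=
            mul_le_mul_of_nonneg_left hD hc.le
        _ = 2 * ctVal f C := by field_simp
  have hmain : ∀ x : X, Hint f μ x ≤ ENNReal.ofReal (3 * ctVal f C) := by
    intro x
    set S : ℕ → ℝ := fun k => ∑ j ∈ Finset.range k,
      dist (C.parent^[j] x) (C.parent^[j+1] x) with hSdef
    have hS_nonneg : ∀ k, 0 ≤ S k := fun k => Finset.sum_nonneg fun j _ => dist_nonneg
    have hS_succ : ∀ k, S (k+1) = S k + dist (C.parent^[k] x) (C.parent^[k+1] x) :=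
      fun k => Finset.sum_range_succ _ k
    have hS_mono : ∀ k, S k ≤ S (k+1) := by
      intro k; rw [hS_succ]; linarith [dist_nonneg (x := C.parent^[k] x) (y := C.parent^[k+1] x)]
    have hdistS : ∀ k, dist x (C.parent^[k] x) ≤ S k := fun k => dist_le_pathSum C x k
    have hstep : ∀ k, (∫⁻ r in Set.Ioc (S k) (S (k+1)), chainFnE f (ballMass μ x r))
        ≤ ENNReal.ofReal (edgeLen f C (C.parent^[k] x)) := by
      intro k
      by_cases hk : C.parent^[k] x = C.root
      · have h0 : dist (C.parent^[k] x) (C.parent^[k+1] x) = 0 := by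
          rw [Function.iterate_succ_apply', hk, C.parent_root, dist_self]
        rw [hS_succ, h0, add_zero, Set.Ioc_self]
        simp only [Measure.restrict_empty, lintegral_zero_measure]
        exact zero_le
      · obtain ⟨hp0, hp2⟩ := C.prob_mem _ hk
        have hb : ∀ r ∈ Set.Ioc (S k) (S (k+1)), chainFnE f (ballMass μ x r)
            ≤ ENNReal.ofReal (chainFn f (C.prob (C.parent^[k] x))) := by
          intro r hr
          have hd : dist x (C.parent^[k] x) ≤ r := (hdistS k).trans hr.1.le
          have h1 : C.prob (C.parent^[k] x) ≤ ballMass μ x r := by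
            have := hmass_ge x (C.parent^[k] x) r hd
            rwa [hμy _ hk] at this
          exact (chainFnE_antitone f h1).trans (le_of_eq (chainFnE_eq hfi hf.total hp0))
        calc (∫⁻ r in Set.Ioc (S k) (S (k+1)), chainFnE f (ballMass μ x r))
            ≤ ∫⁻ _ in Set.Ioc (S k) (S (k+1)),
                ENNReal.ofReal (chainFn f (C.prob (C.parent^[k] x))) :=
              setLIntegral_mono measurable_const hb
          _ = ENNReal.ofReal (chainFn f (C.prob (C.parent^[k] x)))
                * volume (Set.Ioc (S k) (S (k+1))) := setLIntegral_const _ _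
          _ = ENNReal.ofReal (chainFn f (C.prob (C.parent^[k] x)))
                * ENNReal.ofReal (S (k+1) - S k) := by rw [Real.volume_Ioc]
          _ ≤ ENNReal.ofReal (edgeLen f C (C.parent^[k] x)) := by
              rw [← ENNReal.ofReal_mul (chainFn_nonneg f _)]
              apply ENNReal.ofReal_le_ofReal
              have hd2 : S (k+1) - S k = dist (C.parent^[k] x) (C.parent (C.parent^[k] x)) := by
                rw [hS_succ, Function.iterate_succ_apply']; ring
              rw [hd2, edgeLen, mul_comm]
    have hcum : ∀ k, (∫⁻ r in Set.Ioc 0 (S k), chainFnE f (ballMass μ x r))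
        ≤ ENNReal.ofReal (∑ j ∈ Finset.range k, edgeLen f C (C.parent^[j] x)) := by
      intro k
      induction k with
      | zero =>
        have hS0 : S 0 = 0 := by simp [hSdef]
        rw [hS0, Set.Ioc_self]
        simp only [Measure.restrict_empty, lintegral_zero_measure]
        exact zero_le
      | succ k ih =>
        rw [← Set.Ioc_union_Ioc_eq_Ioc (hS_nonneg k) (hS_mono k),
          lintegral_union measurableSet_Ioc (Set.Ioc_disjoint_Ioc_of_le le_rfl),
          Finset.sum_range_succ,
          ENNReal.ofReal_add (Finset.sum_nonneg fun j _ => hedge_nonneg _) (hedge_nonneg _)]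
        exact add_le_add ih (hstep k)
    have hrootdist : dist x C.root ≤ S (Fintype.card X) := by
      have := hdistS (Fintype.card X)
      rwa [iterate_card_eq_root C x] at this
    set M := max (S (Fintype.card X)) (fdiam X) with hMdef
    have hSM : S (Fintype.card X) ≤ M := le_max_left _ _
    have htail1 : (∫⁻ r in Set.Ioc (S (Fintype.card X)) M, chainFnE f (ballMass μ x r))
        ≤ ENNReal.ofReal (2 * ctVal f C) := by
      have hb : ∀ r ∈ Set.Ioc (S (Fintype.card X)) M, chainFnE f (ballMass μ x r)
          ≤ ENNReal.ofReal (chainFn f (1/2)) := by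
        intro r hr
        have h1 : (1:ℝ)/2 ≤ ballMass μ x r :=
          le_trans hμroot_ge (hmass_ge x C.root r (hrootdist.trans hr.1.le))
        exact (chainFnE_antitone f h1).trans (le_of_eq (chainFnE_eq hfi hf.total one_half_pos))
      have hMsub : M - S (Fintype.card X) ≤ fdiam X := by
        have := hS_nonneg (Fintype.card X)
        rw [hMdef]
        rcases max_cases (S (Fintype.card X)) (fdiam X) with ⟨h1, _⟩ | ⟨h1, _⟩ <;>
          rw [h1] <;> linarith
      calc (∫⁻ r in Set.Ioc (S (Fintype.card X)) M, chainFnE f (ballMass μ x r))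
          ≤ ∫⁻ _ in Set.Ioc (S (Fintype.card X)) M, ENNReal.ofReal (chainFn f (1/2)) :=
            setLIntegral_mono measurable_const hb
        _ = ENNReal.ofReal (chainFn f (1/2)) * volume (Set.Ioc (S (Fintype.card X)) M) :=
            setLIntegral_const _ _
        _ = ENNReal.ofReal (chainFn f (1/2)) * ENNReal.ofReal (M - S (Fintype.card X)) := by
            rw [Real.volume_Ioc]
        _ ≤ ENNReal.ofReal (chainFn f (1/2)) * ENNReal.ofReal (fdiam X) :=
            mul_le_mul_right (ENNReal.ofReal_le_ofReal hMsub) _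
        _ = ENNReal.ofReal (chainFn f (1/2) * fdiam X) := (ENNReal.ofReal_mul hc0).symm
        _ ≤ ENNReal.ofReal (2 * ctVal f C) := ENNReal.ofReal_le_ofReal hdiam
    have htail2 : (∫⁻ r in Set.Ioi M, chainFnE f (ballMass μ x r)) = 0 := by
      have hb : ∀ r ∈ Set.Ioi M, chainFnE f (ballMass μ x r) ≤ 0 := by
        intro r hr
        have h1 : fdiam X ≤ r := (le_max_right _ _).trans hr.le
        rw [hmass_one x r h1, chainFnE_of_one_le hf.total le_rfl]
      refine le_antisymm (le_trans (setLIntegral_mono measurable_const hb) ?_) zero_le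
      simp
    have hsplit1 : Hint f μ x
        = (∫⁻ r in Set.Ioc 0 (S (Fintype.card X)), chainFnE f (ballMass μ x r))
          + (∫⁻ r in Set.Ioi (S (Fintype.card X)), chainFnE f (ballMass μ x r)) := by
      rw [Hint, ← Set.Ioc_union_Ioi_eq_Ioi (hS_nonneg (Fintype.card X)),
        lintegral_union measurableSet_Ioi (Set.Ioc_disjoint_Ioi le_rfl)]
    have hsplit2 : (∫⁻ r in Set.Ioi (S (Fintype.card X)), chainFnE f (ballMass μ x r))
        = (∫⁻ r in Set.Ioc (S (Fintype.card X)) M, chainFnE f (ballMass μ x r))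
          + (∫⁻ r in Set.Ioi M, chainFnE f (ballMass μ x r)) := by
      rw [← Set.Ioc_union_Ioi_eq_Ioi hSM,
        lintegral_union measurableSet_Ioi (Set.Ioc_disjoint_Ioi le_rfl)]
    have hpl : (∑ j ∈ Finset.range (Fintype.card X), edgeLen f C (C.parent^[j] x))
        = pathLen f C x := rfl
    have h1 : (∫⁻ r in Set.Ioc 0 (S (Fintype.card X)), chainFnE f (ballMass μ x r))
        ≤ ENNReal.ofReal (ctVal f C) := by
      refine (hcum (Fintype.card X)).trans (ENNReal.ofReal_le_ofReal ?_)
      rw [hpl]; exact hpath_le x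
    rw [hsplit1, hsplit2, htail2, add_zero]
    calc (∫⁻ r in Set.Ioc 0 (S (Fintype.card X)), chainFnE f (ballMass μ x r))
          + (∫⁻ r in Set.Ioc (S (Fintype.card X)) M, chainFnE f (ballMass μ x r))
        ≤ ENNReal.ofReal (ctVal f C) + ENNReal.ofReal (2 * ctVal f C) := add_le_add h1 htail1
      _ = ENNReal.ofReal (3 * ctVal f C) := by
          rw [← ENNReal.ofReal_add hval_nonneg (by linarith)]
          ring_nf
  refine ⟨⟨μ, hprob, iSup_le hmain⟩, ?_⟩
  exact le_trans (iInf_le _ ⟨μ, hprob⟩) (iSup_le hmain)
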